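/- arXiv:2010.12057 — 3 statements merged into one kernel-verified Lean document; each statement's English description precedes it below -/
import Mathlib

section
/- Horizontal pasting detection of D-exactness: let D be a left derivator and consider a square with functors v : A → B, p : A → C, q : B → D₀, w : C → D₀ and natural transformation α : q∘v ⟹ w∘p. For each c ∈ C paste on the left the comma square of p over c. Then the original square is D-exact if and only if for every c ∈ C the total pasted square (with corners (p/c), B, e, D₀) is D-exact. -/
open CategoryTheory

universe w v

namespace DerTheory

abbrev ecat : Cat.{0, 0} := Cat.of (Discrete PUnit.{1})

/-- The empty category. -/
abbrev emptyCat : Cat.{0, 0} := Cat.of (Discrete PEmpty.{1})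

/-- The functor `e ⟶ K` classifying an object `k : K`. -/
abbrev ptFun {K : Cat.{0, 0}} (k : K) : ecat ⟶ K := (Functor.fromPUnit.{0} k).toCatHom

/-- The projection `K ⟶ e`. -/
abbrev starFun (K : Cat.{0, 0}) : K ⟶ ecat := (Functor.star K).toCatHom

open Bicategory in
/-- A prederivator: a strict 2-functor `Cat^op ⥤ CAT`, reversing 1-morphisms and
preserving 2-morphisms. -/
structure Prederivator where
  obj : Cat.{0, 0} → Cat.{v, w}
  map : {J K : Cat.{0, 0}} → (J ⟶ K) → (obj K ⟶ obj J)
  map₂ : {J K : Cat.{0, 0}} → {f g : J ⟶ K} → (f ⟶ g) → (map f ⟶ map g)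
  map_id : ∀ K : Cat.{0, 0}, map (𝟙 K) = 𝟙 (obj K)
  map_comp : ∀ {I J K : Cat.{0, 0}} (f : I ⟶ J) (g : J ⟶ K), map (f ≫ g) = map g ≫ map f
  map₂_id : ∀ {J K : Cat.{0, 0}} (f : J ⟶ K), map₂ (𝟙 f) = 𝟙 (map f)
  map₂_comp : ∀ {J K : Cat.{0, 0}} {f g h : J ⟶ K} (α : f ⟶ g) (β : g ⟶ h),
    map₂ (α ≫ β) = map₂ α ≫ map₂ β
  map₂_whiskerLeft : ∀ {I J K : Cat.{0, 0}} (f : I ⟶ J) {g h : J ⟶ K} (α : g ⟶ h),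
    map₂ (f ◁ α) = eqToHom (map_comp f g) ≫ map₂ α ▷ map f ≫ eqToHom (map_comp f h).symm
  map₂_whiskerRight : ∀ {I J K : Cat.{0, 0}} {f g : I ⟶ J} (α : f ⟶ g) (h : J ⟶ K),
    map₂ (α ▷ h) = eqToHom (map_comp f h) ≫ map h ◁ map₂ α ≫ eqToHom (map_comp g h).symm

/-- A semiderivator: a prederivator satisfying (Der1) and (Der2). -/
structure Semiderivator extends Prederivator where
  der1 : ∀ {ι : Type} (F : ι → Cat.{0, 0}),
    (Functor.pi' fun i =>
      (map (show F i ⟶ Cat.of (Σ j, ↥(F j)) from (Sigma.incl (C := fun j => ↥(F j)) i).toCatHom)).toFunctor).IsEquivalence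
  der2 : ∀ {K : Cat.{0, 0}} {X Y : obj K} (φ : X ⟶ Y),
    (∀ k : K, IsIso ((map (ptFun k)).toFunctor.map φ)) → IsIso φ

/-- The data of left Kan extensions along every functor. -/
structure LeftDerivatorData extends Semiderivator where
  kanL : {J K : Cat.{0, 0}} → (J ⟶ K) → (obj J ⟶ obj K)
  adjL : ∀ {J K : Cat.{0, 0}} (f : J ⟶ K), (kanL f).toFunctor ⊣ (map f).toFunctor

/-- The Beck–Chevalley transformation (left mate) `p_! ∘ v* ⟹ w* ∘ q_!` associated to a
square `α : v ≫ q ⟶ p ≫ w` in `Cat`. -/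
def LeftDerivatorData.bcL (D : LeftDerivatorData) {A B C E : Cat.{0, 0}}
    (p : A ⟶ C) (q : B ⟶ E) (v : A ⟶ B) (w : C ⟶ E) (α : (v ≫ q : A ⟶ E) ⟶ p ≫ w) :
    (D.map v ≫ D.kanL p : D.obj B ⟶ D.obj C) ⟶ D.kanL q ≫ D.map w :=
  Cat.Hom₂.ofNatTrans (Functor.whiskerRight (D.adjL q).unit ((D.map v).toFunctor ⋙ (D.kanL p).toFunctor) ≫
    Functor.whiskerLeft (D.kanL q).toFunctor
      (Functor.whiskerRight (eqToHom (D.map_comp v q).symm ≫ D.map₂ α ≫ eqToHom (D.map_comp p w)).toNatTrans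
        (D.kanL p).toFunctor) ≫
    Functor.whiskerLeft ((D.kanL q).toFunctor ⋙ (D.map w).toFunctor) (D.adjL p).counit)

/-- A left derivator: a semiderivator satisfying (Der3L) and (Der4L). -/
structure LeftDerivator extends LeftDerivatorData where
  der4L : ∀ {J K : Cat.{0, 0}} (u : J ⟶ K) (k : K),
    IsIso (toLeftDerivatorData.bcL (show Cat.of (CostructuredArrow u.toFunctor k) ⟶ ecat from (Comma.snd u.toFunctor (Functor.fromPUnit k)).toCatHom)
      u (Comma.fst u.toFunctor (Functor.fromPUnit k)).toCatHom (ptFun k) (Cat.Hom₂.ofNatTrans (Comma.natTrans u.toFunctor (Functor.fromPUnit k))))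


namespace LeftDerivatorData

variable (D : LeftDerivatorData)

/-- The residual 2-cell `q* ∘ v* ⟶ w* ∘ p*` of a square under `D`. -/
def sq {A B C E : Cat.{0, 0}}
    (p : A ⟶ C) (q : B ⟶ E) (v : A ⟶ B) (w : C ⟶ E) (α : (v ≫ q : A ⟶ E) ⟶ p ≫ w) :
    TwoSquare (D.map q).toFunctor (D.map w).toFunctor (D.map v).toFunctor (D.map p).toFunctor :=
  (eqToHom (D.map_comp v q).symm ≫ D.map₂ α ≫ eqToHom (D.map_comp p w)).toNatTrans

/-- The left mate as a `TwoSquare`. -/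
def bcLsq {A B C E : Cat.{0, 0}}
    (p : A ⟶ C) (q : B ⟶ E) (v : A ⟶ B) (w : C ⟶ E) (α : (v ≫ q : A ⟶ E) ⟶ p ≫ w) :
    TwoSquare (D.map v).toFunctor (D.kanL q).toFunctor (D.kanL p).toFunctor (D.map w).toFunctor :=
  (D.bcL p q v w α).toNatTrans

lemma bcL_eq_mateEquiv_symm {A B C E : Cat.{0, 0}}
    (p : A ⟶ C) (q : B ⟶ E) (v : A ⟶ B) (w : C ⟶ E) (α : (v ≫ q : A ⟶ E) ⟶ p ≫ w) :
    D.bcLsq p q v w α =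
      (mateEquiv (D.adjL q) (D.adjL p)).symm (D.sq p q v w α) := by
  ext X
  simp [bcLsq, bcL, sq, mateEquiv]

end LeftDerivatorData
section conj
variable {C : Type*} {D : Type*} {E : Type*} {F : Type*}
variable [Category C] [Category D] [Category E] [Category F]
variable {L₁ : C ⥤ D} {R₁ : D ⥤ C} {L₂ : E ⥤ F} {R₂ : F ⥤ E}
variable (adj₁ : L₁ ⊣ R₁) (adj₂ : L₂ ⊣ R₂)

lemma mateEquiv_symm_conj {G G' : C ⥤ E} {H H' : D ⥤ F} (hG : G = G') (hH : H = H')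
    (β : TwoSquare R₁ H' G' R₂) :
    (mateEquiv (G := G) (H := H) adj₁ adj₂).symm
        (TwoSquare.mk _ _ _ _ (Functor.whiskerLeft R₁ (eqToHom hG) ≫ β.natTrans ≫
          Functor.whiskerRight (eqToHom hH.symm) R₂)) =
      TwoSquare.mk _ _ _ _ (Functor.whiskerRight (eqToHom hG) L₂ ≫
        ((mateEquiv (G := G') (H := H') adj₁ adj₂).symm β).natTrans ≫
        Functor.whiskerLeft L₁ (eqToHom hH.symm)) := by
  subst hG hH
  ext X
  simp

lemma mateEquiv_symm_vcomp {A' : Type*} {B' : Type*} [Category A'] [Category B']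
    {L₃ : A' ⥤ B'} {R₃ : B' ⥤ A'} (adj₃ : L₃ ⊣ R₃)
    {G₁ : C ⥤ E} {H₁ : D ⥤ F} {G₂ : E ⥤ A'} {H₂ : F ⥤ B'}
    (α : TwoSquare R₁ H₁ G₁ R₂) (β : TwoSquare R₂ H₂ G₂ R₃) :
    (mateEquiv (G := G₁ ⋙ G₂) (H := H₁ ⋙ H₂) adj₁ adj₃).symm (TwoSquare.vComp α β) =
      TwoSquare.hComp ((mateEquiv adj₁ adj₂).symm α) ((mateEquiv adj₂ adj₃).symm β) := by
  rw [Equiv.symm_apply_eq, mateEquiv_vcomp adj₁ adj₂ adj₃, Equiv.apply_symm_apply,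
    Equiv.apply_symm_apply]

end conj

lemma cat_isIso_iff {X Y : Cat.{v, w}} {F G : X ⟶ Y} (η : F ⟶ G) :
    IsIso η ↔ IsIso η.toNatTrans := by
  constructor
  · intro _
    exact (inferInstance : IsIso (asIso η).hom.toNatTrans)
  · intro _
    exact ⟨⟨Cat.Hom₂.ofNatTrans (inv η.toNatTrans), Cat.Hom₂.ext (by simp),
      Cat.Hom₂.ext (by simp)⟩⟩

namespace LeftDerivatorData

variable (D : LeftDerivatorData)

lemma sq_paste {A' A B C' C E : Cat.{0, 0}}
    (p : A ⟶ C) (q : B ⟶ E) (v : A ⟶ B) (w : C ⟶ E) (α : (v ≫ q : A ⟶ E) ⟶ p ≫ w)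
    (p' : A' ⟶ C') (v' : A' ⟶ A) (w' : C' ⟶ C) (β : (v' ≫ p : A' ⟶ C) ⟶ p' ≫ w') :
    D.sq p' q (v' ≫ v) (w' ≫ w)
        (show ((v' ≫ v) ≫ q : A' ⟶ E) ⟶ p' ≫ (w' ≫ w) from
          Cat.Hom₂.ofNatTrans (Functor.whiskerLeft v'.toFunctor α.toNatTrans ≫
            Functor.whiskerRight β.toNatTrans w.toFunctor)) =
      TwoSquare.mk _ _ _ _
        (Functor.whiskerLeft (D.map q).toFunctor
          (eqToHom (congrArg Cat.Hom.toFunctor (D.map_comp v' v))) ≫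
        (TwoSquare.vComp (D.sq p q v w α) (D.sq p' p v' w' β)).natTrans ≫
        Functor.whiskerRight (eqToHom (congrArg Cat.Hom.toFunctor (D.map_comp w' w)).symm)
          (D.map p').toFunctor) := by
  have h1 : (show ((v' ≫ v) ≫ q : A' ⟶ E) ⟶ p' ≫ (w' ≫ w) from
      Cat.Hom₂.ofNatTrans (Functor.whiskerLeft v'.toFunctor α.toNatTrans ≫
            Functor.whiskerRight β.toNatTrans w.toFunctor)) =
      (Bicategory.whiskerLeft v' α : (v' ≫ (v ≫ q) : A' ⟶ E) ⟶ v' ≫ (p ≫ w)) ≫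
        (Bicategory.whiskerRight β w) := rfl
  ext X
  rw [h1]
  simp [sq, TwoSquare.vComp, D.map₂_comp, D.map₂_whiskerLeft,
    D.map₂_whiskerRight, Cat.eqToHom_app, eqToHom_map]

lemma bcL_paste {A' A B C' C E : Cat.{0, 0}}
    (p : A ⟶ C) (q : B ⟶ E) (v : A ⟶ B) (w : C ⟶ E) (α : (v ≫ q : A ⟶ E) ⟶ p ≫ w)
    (p' : A' ⟶ C') (v' : A' ⟶ A) (w' : C' ⟶ C) (β : (v' ≫ p : A' ⟶ C) ⟶ p' ≫ w') :
    (D.bcL p' q (v' ≫ v) (w' ≫ w)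
        (show ((v' ≫ v) ≫ q : A' ⟶ E) ⟶ p' ≫ (w' ≫ w) from
          Cat.Hom₂.ofNatTrans (Functor.whiskerLeft v'.toFunctor α.toNatTrans ≫
            Functor.whiskerRight β.toNatTrans w.toFunctor))).toNatTrans =
      Functor.whiskerRight (eqToHom (congrArg Cat.Hom.toFunctor (D.map_comp v' v)))
          (D.kanL p').toFunctor ≫
        (TwoSquare.hComp (D.bcLsq p q v w α) (D.bcLsq p' p v' w' β)).natTrans ≫
        Functor.whiskerLeft (D.kanL q).toFunctor
          (eqToHom (congrArg Cat.Hom.toFunctor (D.map_comp w' w)).symm) := by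
  change D.bcLsq _ _ _ _ _ = _
  simp only [bcL_eq_mateEquiv_symm]
  rw [D.sq_paste p q v w α p' v' w' β]
  rw [mateEquiv_symm_conj (D.adjL q) (D.adjL p') (congrArg Cat.Hom.toFunctor (D.map_comp v' v))
    (congrArg Cat.Hom.toFunctor (D.map_comp w' w))]
  rw [mateEquiv_symm_vcomp (D.adjL q) (D.adjL p) (D.adjL p')]

end LeftDerivatorData

/-- **Horizontal pasting detection of `D`-exactness.**  Let `D` be a left derivator and
consider a square with functors `v : A ⟶ B`, `p : A ⟶ C`, `q : B ⟶ E`, `w : C ⟶ E` and a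
natural transformation `α : q ∘ v ⟹ w ∘ p`.  For each `c ∈ C` paste on the left the comma
square of `p` over `c`.  Then the original square is `D`-exact (its left mate
`α_! : p_! ∘ v* ⟹ w* ∘ q_!` is an isomorphism) if and only if for every `c ∈ C` the total
pasted square, with corners `(p/c), B, e, E`, is `D`-exact. -/
theorem bcL_isIso_iff_pasted (D : LeftDerivator) {A B C E : Cat.{0, 0}}
    (v : A ⟶ B) (p : A ⟶ C) (q : B ⟶ E) (w : C ⟶ E)
    (α : (v ≫ q : A ⟶ E) ⟶ p ≫ w) :
    IsIso (D.toLeftDerivatorData.bcL p q v w α) ↔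
      ∀ c : C,
        IsIso (D.toLeftDerivatorData.bcL
          (show Cat.of (CostructuredArrow p.toFunctor c) ⟶ ecat from
            (Comma.snd p.toFunctor (Functor.fromPUnit c)).toCatHom)
          q
          ((Comma.fst p.toFunctor (Functor.fromPUnit c)).toCatHom ≫ v)
          (ptFun c ≫ w)
          (show (((Comma.fst p.toFunctor (Functor.fromPUnit c)).toCatHom ≫ v) ≫ q :
              Cat.of (CostructuredArrow p.toFunctor c) ⟶ E) ⟶
              (Comma.snd p.toFunctor (Functor.fromPUnit c)).toCatHom ≫ (ptFun c ≫ w) from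
            Cat.Hom₂.ofNatTrans (Functor.whiskerLeft (Comma.fst p.toFunctor (Functor.fromPUnit c)) α.toNatTrans ≫
              Functor.whiskerRight (Comma.natTrans p.toFunctor (Functor.fromPUnit c)) w.toFunctor))) := by
  have key : ∀ c : C,
      (D.toLeftDerivatorData.bcL
          (show Cat.of (CostructuredArrow p.toFunctor c) ⟶ ecat from
            (Comma.snd p.toFunctor (Functor.fromPUnit c)).toCatHom)
          q
          ((Comma.fst p.toFunctor (Functor.fromPUnit c)).toCatHom ≫ v)
          (ptFun c ≫ w)
          (show (((Comma.fst p.toFunctor (Functor.fromPUnit c)).toCatHom ≫ v) ≫ q :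
              Cat.of (CostructuredArrow p.toFunctor c) ⟶ E) ⟶
              (Comma.snd p.toFunctor (Functor.fromPUnit c)).toCatHom ≫ (ptFun c ≫ w) from
            Cat.Hom₂.ofNatTrans (Functor.whiskerLeft (Comma.fst p.toFunctor (Functor.fromPUnit c)) α.toNatTrans ≫
              Functor.whiskerRight (Comma.natTrans p.toFunctor (Functor.fromPUnit c)) w.toFunctor))).toNatTrans =
        Functor.whiskerRight (eqToHom (congrArg Cat.Hom.toFunctor (D.map_comp
            (Comma.fst p.toFunctor (Functor.fromPUnit c)).toCatHom v)))
            (D.kanL (show Cat.of (CostructuredArrow p.toFunctor c) ⟶ ecat from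
              (Comma.snd p.toFunctor (Functor.fromPUnit c)).toCatHom)).toFunctor ≫
          (TwoSquare.hComp (D.bcLsq p q v w α)
            (D.bcLsq (show Cat.of (CostructuredArrow p.toFunctor c) ⟶ ecat from
              (Comma.snd p.toFunctor (Functor.fromPUnit c)).toCatHom) p
              (Comma.fst p.toFunctor (Functor.fromPUnit c)).toCatHom (ptFun c)
              (Cat.Hom₂.ofNatTrans (Comma.natTrans p.toFunctor (Functor.fromPUnit c))))).natTrans ≫
          Functor.whiskerLeft (D.kanL q).toFunctor
            (eqToHom (congrArg Cat.Hom.toFunctor (D.map_comp (ptFun c) w)).symm) := by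
    intro c
    exact D.toLeftDerivatorData.bcL_paste p q v w α
      (show Cat.of (CostructuredArrow p.toFunctor c) ⟶ ecat from
        (Comma.snd p.toFunctor (Functor.fromPUnit c)).toCatHom)
      (Comma.fst p.toFunctor (Functor.fromPUnit c)).toCatHom (ptFun c)
      (Cat.Hom₂.ofNatTrans (Comma.natTrans p.toFunctor (Functor.fromPUnit c)))
  have capp : ∀ (c : C) (X : D.obj B),
      (TwoSquare.hComp (D.bcLsq p q v w α)
            (D.bcLsq (show Cat.of (CostructuredArrow p.toFunctor c) ⟶ ecat from
              (Comma.snd p.toFunctor (Functor.fromPUnit c)).toCatHom) p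
              (Comma.fst p.toFunctor (Functor.fromPUnit c)).toCatHom (ptFun c)
              (Cat.Hom₂.ofNatTrans (Comma.natTrans p.toFunctor (Functor.fromPUnit c))))).natTrans.app X =
        (D.toLeftDerivatorData.bcL (show Cat.of (CostructuredArrow p.toFunctor c) ⟶ ecat from
              (Comma.snd p.toFunctor (Functor.fromPUnit c)).toCatHom) p
              (Comma.fst p.toFunctor (Functor.fromPUnit c)).toCatHom (ptFun c)
              (Cat.Hom₂.ofNatTrans (Comma.natTrans p.toFunctor (Functor.fromPUnit c)))).toNatTrans.app
            ((D.map v).toFunctor.obj X) ≫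
          (D.map (ptFun c)).toFunctor.map ((D.toLeftDerivatorData.bcL p q v w α).toNatTrans.app X) := by
    intro c X
    simp [TwoSquare.hComp, LeftDerivatorData.bcLsq]
  have d4 : ∀ c : C, IsIso (D.toLeftDerivatorData.bcL (show Cat.of (CostructuredArrow p.toFunctor c) ⟶ ecat from
              (Comma.snd p.toFunctor (Functor.fromPUnit c)).toCatHom) p
              (Comma.fst p.toFunctor (Functor.fromPUnit c)).toCatHom (ptFun c)
              (Cat.Hom₂.ofNatTrans (Comma.natTrans p.toFunctor (Functor.fromPUnit c)))).toNatTrans :=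
    fun c => (cat_isIso_iff _).1 (D.der4L p c)
  rw [cat_isIso_iff]
  constructor
  · intro h c
    rw [cat_isIso_iff, key c]
    haveI := d4 c
    haveI : IsIso (TwoSquare.hComp (D.bcLsq p q v w α)
            (D.bcLsq (show Cat.of (CostructuredArrow p.toFunctor c) ⟶ ecat from
              (Comma.snd p.toFunctor (Functor.fromPUnit c)).toCatHom) p
              (Comma.fst p.toFunctor (Functor.fromPUnit c)).toCatHom (ptFun c)
              (Cat.Hom₂.ofNatTrans (Comma.natTrans p.toFunctor (Functor.fromPUnit c))))).natTrans := by
      refine @NatIso.isIso_of_isIso_app _ _ _ _ _ _ _ (fun X => ?_)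
      rw [capp c X]
      infer_instance
    have iA := Functor.isIso_whiskerRight (eqToHom (congrArg Cat.Hom.toFunctor (D.map_comp
            (Comma.fst p.toFunctor (Functor.fromPUnit c)).toCatHom v)))
      (D.kanL (show Cat.of (CostructuredArrow p.toFunctor c) ⟶ ecat from
        (Comma.snd p.toFunctor (Functor.fromPUnit c)).toCatHom)).toFunctor
    have iB := Functor.isIso_whiskerLeft (D.kanL q).toFunctor
      (eqToHom (congrArg Cat.Hom.toFunctor (D.map_comp (ptFun c) w)).symm)
    exact @IsIso.comp_isIso _ _ _ _ _ _ _ iA (@IsIso.comp_isIso _ _ _ _ _ _ _ this iB)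
  · intro h
    refine @NatIso.isIso_of_isIso_app _ _ _ _ _ _ _ (fun X => ?_)
    apply D.der2
    intro c
    haveI := d4 c
    have hc := (cat_isIso_iff _).1 (h c)
    rw [key c] at hc
    haveI := hc
    haveI h1 := IsIso.of_isIso_comp_left (f := Functor.whiskerRight (eqToHom (congrArg Cat.Hom.toFunctor (D.map_comp
            (Comma.fst p.toFunctor (Functor.fromPUnit c)).toCatHom v)))
            (D.kanL (show Cat.of (CostructuredArrow p.toFunctor c) ⟶ ecat from
              (Comma.snd p.toFunctor (Functor.fromPUnit c)).toCatHom)).toFunctor) (g := (TwoSquare.hComp (D.bcLsq p q v w α)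
            (D.bcLsq (show Cat.of (CostructuredArrow p.toFunctor c) ⟶ ecat from
              (Comma.snd p.toFunctor (Functor.fromPUnit c)).toCatHom) p
              (Comma.fst p.toFunctor (Functor.fromPUnit c)).toCatHom (ptFun c)
              (Cat.Hom₂.ofNatTrans (Comma.natTrans p.toFunctor (Functor.fromPUnit c))))).natTrans ≫
          Functor.whiskerLeft (D.kanL q).toFunctor
            (eqToHom (congrArg Cat.Hom.toFunctor (D.map_comp (ptFun c) w)).symm))
    have iB := Functor.isIso_whiskerLeft (D.kanL q).toFunctor
      (eqToHom (congrArg Cat.Hom.toFunctor (D.map_comp (ptFun c) w)).symm)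
    have h2 := @IsIso.of_isIso_comp_right _ _ _ _ _ _ _ iB h1
    have h3 : IsIso ((TwoSquare.hComp (D.bcLsq p q v w α)
            (D.bcLsq (show Cat.of (CostructuredArrow p.toFunctor c) ⟶ ecat from
              (Comma.snd p.toFunctor (Functor.fromPUnit c)).toCatHom) p
              (Comma.fst p.toFunctor (Functor.fromPUnit c)).toCatHom (ptFun c)
              (Cat.Hom₂.ofNatTrans (Comma.natTrans p.toFunctor (Functor.fromPUnit c))))).natTrans.app X) := @NatIso.isIso_app_of_isIso _ _ _ _ _ _ _ h2 X
    rw [capp c X] at h3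
    exact @IsIso.of_isIso_comp_left _ _ _ _ _ _ _ inferInstance h3

end DerTheory
end

section
/- For functors u₁ : J₁ → K and u₂ : J₂ → K, the functor r : (u₁/u₂(j₂)) → (pr₂/j₂) sending (j₁, h : u₁(j₁) → u₂(j₂)) to the object of the comma category (pr₂/j₂) given by ((j₁, j₂, h), id_{j₂}) admits a left adjoint, given by sending ((j₁', j₂', f, g : j₂' → j₂)) to (j₁', u₂(g) ∘ f). -/
open CategoryTheory

universe v₁ v₂ v₃ u₁ u₂ u₃

variable {J₁ : Type u₁} {J₂ : Type u₂} {K : Type u₃}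
variable [Category.{v₁} J₁] [Category.{v₂} J₂] [Category.{v₃} K]

/-- The object `(j₁, j₂, h)` of the comma category `(u₁/u₂)` associated to an object
`(j₁, h : u₁(j₁) ⟶ u₂(j₂))` of `(u₁/u₂(j₂))`. -/
def rObj (u₁ : J₁ ⥤ K) (u₂ : J₂ ⥤ K) (j₂ : J₂) (X : CostructuredArrow u₁ (u₂.obj j₂)) :
    Comma u₁ u₂ where
  left := X.left
  right := j₂
  hom := X.hom

/-- The comparison functor `r : (u₁/u₂(j₂)) ⥤ (pr₂/j₂)`, sending
`(j₁, h : u₁(j₁) ⟶ u₂(j₂))` to the object `((j₁, j₂, h), id_{j₂})` of the comma category of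
the second projection `pr₂ : (u₁/u₂) ⥤ J₂` over `j₂ : J₂`. -/
def commaComparison (u₁ : J₁ ⥤ K) (u₂ : J₂ ⥤ K) (j₂ : J₂) :
    CostructuredArrow u₁ (u₂.obj j₂) ⥤ CostructuredArrow (Comma.snd u₁ u₂) j₂ where
  obj X := CostructuredArrow.mk (S := Comma.snd u₁ u₂) (Y := rObj u₁ u₂ j₂ X) (𝟙 j₂)
  map {X Y} g := CostructuredArrow.homMk
    { left := g.left, right := 𝟙 j₂, w := by simp [rObj] }
    (Category.comp_id _)
  map_id X := by
    apply CostructuredArrow.hom_ext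
    exact CommaMorphism.ext rfl rfl
  map_comp f g := by
    apply CostructuredArrow.hom_ext
    exact CommaMorphism.ext rfl (Category.comp_id _).symm

def myL (u₁ : J₁ ⥤ K) (u₂ : J₂ ⥤ K) (j₂ : J₂) :
    CostructuredArrow (Comma.snd u₁ u₂) j₂ ⥤ CostructuredArrow u₁ (u₂.obj j₂) where
  obj Y := CostructuredArrow.mk (Y.left.hom ≫ u₂.map Y.hom)
  map {Y Z} g := CostructuredArrow.homMk g.left.left (by
    have h1 := g.left.w
    have h2 := CostructuredArrow.w g
    dsimp at h1 h2 ⊢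
    rw [← h2, u₂.map_comp, ← Category.assoc, h1, Category.assoc]; rfl)

def myAdj (u₁ : J₁ ⥤ K) (u₂ : J₂ ⥤ K) (j₂ : J₂) :
    myL u₁ u₂ j₂ ⊣ commaComparison u₁ u₂ j₂ :=
  Adjunction.mkOfHomEquiv
    { homEquiv := fun Y X =>
        { toFun := fun φ => CostructuredArrow.homMk
            { left := φ.left
              right := Y.hom
              w := by
                have := CostructuredArrow.w φ
                dsimp [myL, rObj, commaComparison] at this ⊢
                exact this }
            (Category.comp_id _)
          invFun := fun ψ => CostructuredArrow.homMk ψ.left.left (by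
            have h1 := ψ.left.w
            have h2 := CostructuredArrow.w ψ
            dsimp [myL, rObj, commaComparison] at h1 h2 ⊢
            rw [h1]
            exact congrArg (fun t => Y.left.hom ≫ u₂.map t) ((Category.comp_id _).symm.trans h2))
          left_inv := fun φ => by apply CostructuredArrow.hom_ext; rfl
          right_inv := fun ψ => by
            apply CostructuredArrow.hom_ext
            refine CommaMorphism.ext rfl ?_
            have h2 := CostructuredArrow.w ψ
            dsimp [commaComparison] at h2
            exact h2.symm.trans (Category.comp_id _) }
      homEquiv_naturality_left_symm := fun f g => by
        apply CostructuredArrow.hom_ext; rfl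
      homEquiv_naturality_right := fun f g => by
        apply CostructuredArrow.hom_ext
        refine CommaMorphism.ext rfl ?_
        exact (Category.comp_id _).symm }

/-- **The comparison functor `r : (u₁/u₂(j₂)) ⥤ (pr₂/j₂)` admits a left adjoint**, given by
sending `(j₁', j₂', f, g : j₂' ⟶ j₂)` to `(j₁', u₂(g) ∘ f)`. -/
theorem commaComparison_isRightAdjoint (u₁ : J₁ ⥤ K) (u₂ : J₂ ⥤ K) (j₂ : J₂) :
    (commaComparison u₁ u₂ j₂).IsRightAdjoint := ⟨_, ⟨myAdj u₁ u₂ j₂⟩⟩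
end

section
/- Let D be a pointed derivator and u : J → K a sieve. Then the right Kan extension u_* : D(J) → D(K) is fully faithful, and for every X ∈ D(J) and every object k ∈ K not in the image of u, the evaluation k*(u_* X) is a zero object of D(e); for k = u(j') in the image, k*(u_* X) ≅ j'* X. -/
open CategoryTheory

universe w v

namespace DerTheory

structure DerivatorData extends Semiderivator where
  kanL : {J K : Cat.{0, 0}} → (J ⟶ K) → (obj J ⟶ obj K)
  adjL : ∀ {J K : Cat.{0, 0}} (f : J ⟶ K), (kanL f).toFunctor ⊣ (map f).toFunctor
  kanR : {J K : Cat.{0, 0}} → (J ⟶ K) → (obj J ⟶ obj K)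
  adjR : ∀ {J K : Cat.{0, 0}} (f : J ⟶ K), (map f).toFunctor ⊣ (kanR f).toFunctor

def DerivatorData.bcL (D : DerivatorData) {A B C E : Cat.{0, 0}}
    (p : A ⟶ C) (q : B ⟶ E) (v : A ⟶ B) (w : C ⟶ E) (α : (v ≫ q : A ⟶ E) ⟶ p ≫ w) :
    (D.map v ≫ D.kanL p : D.obj B ⟶ D.obj C) ⟶ D.kanL q ≫ D.map w :=
  ⟨Functor.whiskerRight (D.adjL q).unit ((D.map v).toFunctor ⋙ (D.kanL p).toFunctor) ≫
    Functor.whiskerLeft (D.kanL q).toFunctor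
      (Functor.whiskerRight (eqToHom (D.map_comp v q).symm ≫ D.map₂ α ≫ eqToHom (D.map_comp p w)).toNatTrans
        (D.kanL p).toFunctor) ≫
    Functor.whiskerLeft ((D.kanL q).toFunctor ⋙ (D.map w).toFunctor) (D.adjL p).counit⟩

def DerivatorData.bcR (D : DerivatorData) {A B C E : Cat.{0, 0}}
    (p : A ⟶ C) (q : B ⟶ E) (v : A ⟶ B) (w : C ⟶ E) (α : (p ≫ w : A ⟶ E) ⟶ v ≫ q) :
    (D.kanR q ≫ D.map w : D.obj B ⟶ D.obj C) ⟶ D.map v ≫ D.kanR p :=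
  ⟨Functor.whiskerLeft ((D.kanR q).toFunctor ⋙ (D.map w).toFunctor) (D.adjR p).unit ≫
    Functor.whiskerLeft (D.kanR q).toFunctor
      (Functor.whiskerRight (eqToHom (D.map_comp p w).symm ≫ D.map₂ α ≫ eqToHom (D.map_comp v q)).toNatTrans
        (D.kanR p).toFunctor) ≫
    Functor.whiskerRight (D.adjR q).counit ((D.map v).toFunctor ⋙ (D.kanR p).toFunctor)⟩

structure Derivator extends DerivatorData where
  der4L : ∀ {J K : Cat.{0, 0}} (u : J ⟶ K) (k : K),
    IsIso (toDerivatorData.bcL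
      (show Cat.of (CostructuredArrow u.toFunctor k) ⟶ ecat from (Comma.snd u.toFunctor (Functor.fromPUnit k)).toCatHom)
      u (Comma.fst u.toFunctor (Functor.fromPUnit k)).toCatHom (ptFun k) ⟨Comma.natTrans u.toFunctor (Functor.fromPUnit k)⟩)
  der4R : ∀ {J K : Cat.{0, 0}} (u : J ⟶ K) (k : K),
    IsIso (toDerivatorData.bcR
      (show Cat.of (StructuredArrow k u.toFunctor) ⟶ ecat from (Comma.fst (Functor.fromPUnit k) u.toFunctor).toCatHom)
      u (Comma.snd (Functor.fromPUnit k) u.toFunctor).toCatHom (ptFun k) ⟨Comma.natTrans (Functor.fromPUnit k) u.toFunctor⟩)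

/-- A sieve: a fully faithful functor, injective on objects, such that whenever there is a
morphism `k ⟶ u(j)` in `K`, the object `k` lies in the image of `u`. -/
def IsSieve {J K : Cat.{0, 0}} (u : J ⟶ K) : Prop :=
  (u.toFunctor : ↥J ⥤ ↥K).Full ∧ (u.toFunctor : ↥J ⥤ ↥K).Faithful ∧ Function.Injective u.toFunctor.obj ∧
    ∀ ⦃k : ↥K⦄ ⦃j : ↥J⦄, (k ⟶ u.toFunctor.obj j) → ∃ j' : ↥J, u.toFunctor.obj j' = k

lemma ptFun_comp {J K : Cat.{0, 0}} (u : J ⟶ K) (j' : ↥J) :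
    (ptFun j' ≫ u : ecat ⟶ K) = ptFun (u.toFunctor.obj j') :=
  Cat.Hom.ext (CategoryTheory.Functor.ext (fun _ => rfl) (by intros; simp [Cat.Hom.comp_toFunctor, Functor.fromPUnit]; exact u.toFunctor.map_id j'))

/-- The canonical comparison `(u(j'))* ∘ u_* ⟹ j'*`, built from the counit of the
adjunction `(u*, u_*)`. -/
def evalKanR (D : Derivator) {J K : Cat.{0, 0}} (u : J ⟶ K) (j' : ↥J) :
    (D.kanR u ≫ D.map (ptFun (u.toFunctor.obj j')) : D.obj J ⟶ D.obj ecat) ⟶ D.map (ptFun j') :=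
  ⟨Functor.whiskerLeft (D.kanR u).toFunctor
    (eqToHom ((congrArg D.map (ptFun_comp u j').symm).trans (D.map_comp _ _))).toNatTrans ≫
  Functor.whiskerRight (D.adjR u).counit (D.map (ptFun j')).toFunctor⟩

/-! ### Auxiliary machinery -/

section Auxiliary

/-- A morphism which is an `eqToHom`. -/
def IsETH {C : Type*} [Category C] {X Y : C} (f : X ⟶ Y) : Prop :=
  ∃ h : X = Y, f = eqToHom h

lemma IsETH.eqToHom' {C : Type*} [Category C] {X Y : C} (h : X = Y) :
    IsETH (eqToHom h) := ⟨h, rfl⟩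

lemma IsETH.comp {C : Type*} [Category C] {X Y Z : C} {f : X ⟶ Y} {g : Y ⟶ Z}
    (hf : IsETH f) (hg : IsETH g) : IsETH (f ≫ g) := by
  obtain ⟨h1, rfl⟩ := hf; obtain ⟨h2, rfl⟩ := hg; exact ⟨h1.trans h2, by simp⟩

lemma IsETH.fmap {C D : Type*} [Category C] [Category D] (F : C ⥤ D) {X Y : C} {f : X ⟶ Y}
    (hf : IsETH f) : IsETH (F.map f) := by
  obtain ⟨h, rfl⟩ := hf; subst h; exact ⟨rfl, by simp⟩

lemma IsETH.app {C D : Type*} [Category C] [Category D] {F G : C ⥤ D} {α : F ⟶ G}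
    (hα : IsETH α) (X : C) : IsETH (α.app X) := by
  obtain ⟨h, rfl⟩ := hα; subst h; exact ⟨rfl, by simp⟩

lemma IsETH.toNatTrans {C D : Cat.{v, w}} {F G : C ⟶ D} {α : F ⟶ G}
    (hα : IsETH α) : IsETH α.toNatTrans := by
  obtain ⟨h, rfl⟩ := hα; subst h; exact ⟨rfl, by simp⟩

lemma IsETH.isIso {C : Type*} [Category C] {X Y : C} {f : X ⟶ Y} (hf : IsETH f) :
    IsIso f := by
  obtain ⟨h, rfl⟩ := hf; infer_instance

lemma IsETH.map_comp3 {C D : Type*} [Category C] [Category D] (F : C ⥤ D) {W X Y Z : C}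
    {a : W ⟶ X} {b : X ⟶ Y} {c : Y ⟶ Z} (ha : IsETH a) (hb : IsETH (F.map b)) (hc : IsETH c) :
    IsETH (F.map (a ≫ b ≫ c)) := by
  rw [Functor.map_comp, Functor.map_comp]
  exact (ha.fmap F).comp (hb.comp (hc.fmap F))

lemma map₂_eqToHom (D : Prederivator) {A B : Cat.{0, 0}} {f g : A ⟶ B} (h : f = g) :
    D.map₂ (eqToHom h) = eqToHom (congrArg D.map h) := by
  subst h; simpa using D.map₂_id f

/-- The unique functor out of an empty category. -/
def emptyFun {A B : Cat.{0, 0}} (h : IsEmpty ↥A) : A ⟶ B where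
  toFunctor :=
  { obj X := h.elim X
    map := fun {X Y} _ => (h.false X).elim
    map_id := fun X => (h.false X).elim
    map_comp := fun {X Y Z} _ _ => (h.false X).elim }

lemma emptyFun_eq {A B : Cat.{0, 0}} (h : IsEmpty ↥A) (F G : A ⟶ B) : F = G :=
  Cat.Hom.ext (CategoryTheory.Functor.ext (fun X => h.elim X) (fun X => h.elim X))

lemma hom_unique_of_isEmpty (D : Derivator) {A : Cat.{0, 0}} (h : IsEmpty ↥A)
    (Y Z : ↥(D.obj A)) : Nonempty (Y ⟶ Z) ∧ ∀ (f g : Y ⟶ Z), f = g := by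
  classical
  let F : PEmpty → Cat.{0, 0} := fun i => i.elim
  have hA₀ : IsEmpty ↥(Cat.of (Σ j, ↥(F j))) := ⟨fun x => x.1.elim⟩
  let g : A ⟶ Cat.of (Σ j, ↥(F j)) := emptyFun h
  let f : Cat.of (Σ j, ↥(F j)) ⟶ A := emptyFun hA₀
  have h1 : (D.map f ≫ D.map g : D.obj A ⟶ D.obj A) = 𝟙 (D.obj A) := by
    rw [← D.map_comp g f, emptyFun_eq h (g ≫ f) (𝟙 A), D.map_id]
  replace h1 := congrArg Cat.Hom.toFunctor h1
  let Φ := Functor.pi' fun i =>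
    (D.map (show F i ⟶ Cat.of (Σ j, ↥(F j)) from (Sigma.incl (C := fun j => ↥(F j)) i).toCatHom)).toFunctor
  haveI hΦ : Φ.IsEquivalence := D.der1 F
  have hsub : ∀ (Y' Z' : ↥(D.obj (Cat.of (Σ j, ↥(F j))))) (q r : Y' ⟶ Z'), q = r := by
    intro Y' Z' q r
    apply Φ.map_injective
    funext i
    exact i.elim
  have hnon : ∀ (Y' Z' : ↥(D.obj (Cat.of (Σ j, ↥(F j))))), Nonempty (Y' ⟶ Z') := fun Y' Z' =>
    ⟨Φ.preimage (fun i => i.elim)⟩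
  have key : ∀ c : Y ⟶ Z, c = eqToHom (Functor.congr_obj h1 Y).symm ≫
      (D.map g).toFunctor.map ((D.map f).toFunctor.map c) ≫ eqToHom (Functor.congr_obj h1 Z) := by
    intro c
    have h2 := Functor.congr_hom h1.symm c
    simpa using h2
  constructor
  · obtain ⟨q⟩ := hnon ((D.map f).toFunctor.obj Y) ((D.map f).toFunctor.obj Z)
    exact ⟨eqToHom (Functor.congr_obj h1 Y).symm ≫ (D.map g).toFunctor.map q ≫
      eqToHom (Functor.congr_obj h1 Z)⟩
  · intro a b
    rw [key a, key b, hsub _ _ ((D.map f).toFunctor.map a) ((D.map f).toFunctor.map b)]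

end Auxiliary

instance : Subsingleton ↥ecat := inferInstanceAs (Subsingleton (Discrete PUnit.{1}))

instance (X Y : ↥ecat) : Subsingleton (X ⟶ Y) :=
  Discrete.instSubsingletonDiscreteHom (α := PUnit.{1}) X Y

section SievePoint

variable {J K : Cat.{0, 0}} (u : J ⟶ K) (j' : ↥J)

/-- The initial object of the comma category `u(j')/u`. -/
def m0 : StructuredArrow (u.toFunctor.obj j') u.toFunctor := StructuredArrow.mk (𝟙 (u.toFunctor.obj j'))

/-- The functor `e ⟶ u(j')/u` classifying the initial object. -/
def aF : ecat ⟶ Cat.of (StructuredArrow (u.toFunctor.obj j') u.toFunctor) := ptFun (m0 u j')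

/-- The projection `u(j')/u ⟶ e`. -/
abbrev pFn : Cat.of (StructuredArrow (u.toFunctor.obj j') u.toFunctor) ⟶ ecat :=
  (Comma.fst (Functor.fromPUnit (u.toFunctor.obj j')) u.toFunctor).toCatHom

/-- The projection `u(j')/u ⟶ J`. -/
abbrev vFn : Cat.of (StructuredArrow (u.toFunctor.obj j') u.toFunctor) ⟶ J :=
  (Comma.snd (Functor.fromPUnit (u.toFunctor.obj j')) u.toFunctor).toCatHom

lemma m0_hom_ext (hfaith : u.toFunctor.Faithful) {m : StructuredArrow (u.toFunctor.obj j') u.toFunctor}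
    (f g : m0 u j' ⟶ m) : f = g := by
  letI := hfaith
  apply StructuredArrow.hom_ext
  apply u.toFunctor.map_injective
  have hf := StructuredArrow.w f
  have hg := StructuredArrow.w g
  rw [show u.toFunctor.map f.right = m.hom by simpa [m0] using hf,
    show u.toFunctor.map g.right = m.hom by simpa [m0] using hg]

/-- The counit of the adjunction `aF ⊣ pF` in `Cat`. -/
noncomputable def epsNat (hfull : u.toFunctor.Full) (hfaith : u.toFunctor.Faithful) :
    (pFn u j' ≫ aF u j' :
      Cat.of (StructuredArrow (u.toFunctor.obj j') u.toFunctor) ⟶ Cat.of (StructuredArrow (u.toFunctor.obj j') u.toFunctor)) ⟶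
      𝟙 (Cat.of (StructuredArrow (u.toFunctor.obj j') u.toFunctor)) where
  toNatTrans :=
  { app m := (StructuredArrow.homMk ((hfull.map_surjective m.hom).choose)
      (by simpa [aF, m0] using (hfull.map_surjective m.hom).choose_spec) : m0 u j' ⟶ m)
    naturality m m' φ := m0_hom_ext u j' hfaith _ _ }

lemma aF_pF : (aF u j' ≫ pFn u j' : ecat ⟶ ecat) = 𝟙 ecat :=
  Cat.Hom.ext (CategoryTheory.Functor.ext (fun _ => Subsingleton.elim _ _)
    (fun _ _ _ => Subsingleton.elim _ _))

lemma aF_vF : (aF u j' ≫ vFn u j' : ecat ⟶ J) = ptFun j' := by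
  apply Cat.Hom.ext
  apply CategoryTheory.Functor.ext (fun _ => rfl)

variable (D : Derivator)

lemma eth_wl_p (hfull : u.toFunctor.Full) (hfaith : u.toFunctor.Faithful) :
    IsETH (Functor.whiskerLeft (D.map (pFn u j')).toFunctor
      (D.map₂ (epsNat u j' hfull hfaith)).toNatTrans) := by
  open Bicategory in
  have hcat : IsETH ((epsNat u j' hfull hfaith) ▷ (pFn u j')) := by
    refine ⟨Cat.Hom.ext (CategoryTheory.Functor.ext (fun m => Subsingleton.elim _ _)
      (fun _ _ _ => Subsingleton.elim _ _)), ?_⟩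
    apply Cat.Hom₂.ext
    apply NatTrans.ext
    funext m
    exact Subsingleton.elim _ _
  open Bicategory in
  have h1 : IsETH (D.map₂ ((epsNat u j' hfull hfaith) ▷ (pFn u j'))) := by
    obtain ⟨h, e⟩ := hcat
    rw [e, map₂_eqToHom]
    exact IsETH.eqToHom' _
  open Bicategory in
  have h2 : (D.map (pFn u j') ◁ D.map₂ (epsNat u j' hfull hfaith)) =
      eqToHom (D.map_comp (pFn u j' ≫ aF u j') (pFn u j')).symm ≫
        D.map₂ ((epsNat u j' hfull hfaith) ▷ (pFn u j')) ≫
        eqToHom (D.map_comp (𝟙 _) (pFn u j')) := by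
    rw [D.map₂_whiskerRight (epsNat u j' hfull hfaith) (pFn u j')]
    simp
  show IsETH (D.map (pFn u j') ◁ D.map₂ (epsNat u j' hfull hfaith)).toNatTrans
  rw [h2]
  exact ((IsETH.eqToHom' _).comp (h1.comp (IsETH.eqToHom' _))).toNatTrans

lemma eth_wr_a_eps (hfull : u.toFunctor.Full) (hfaith : u.toFunctor.Faithful) :
    IsETH (Functor.whiskerRight (D.map₂ (epsNat u j' hfull hfaith)).toNatTrans (D.map (aF u j')).toFunctor) := by
  open Bicategory in
  have hcat : IsETH ((aF u j') ◁ (epsNat u j' hfull hfaith)) := by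
    refine ⟨Cat.Hom.ext (CategoryTheory.Functor.ext (fun x => rfl)
      (fun _ _ _ => m0_hom_ext u j' hfaith _ _)), ?_⟩
    apply Cat.Hom₂.ext
    apply NatTrans.ext
    funext x
    exact m0_hom_ext u j' hfaith _ _
  open Bicategory in
  have h1 : IsETH (D.map₂ ((aF u j') ◁ (epsNat u j' hfull hfaith))) := by
    obtain ⟨h, e⟩ := hcat
    rw [e, map₂_eqToHom]
    exact IsETH.eqToHom' _
  open Bicategory in
  have h2 : (D.map₂ (epsNat u j' hfull hfaith) ▷ D.map (aF u j')) =
      eqToHom (D.map_comp (aF u j') (pFn u j' ≫ aF u j')).symm ≫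
        D.map₂ ((aF u j') ◁ (epsNat u j' hfull hfaith)) ≫
        eqToHom (D.map_comp (aF u j') (𝟙 _)) := by
    rw [D.map₂_whiskerLeft (aF u j') (epsNat u j' hfull hfaith)]
    simp
  show IsETH (D.map₂ (epsNat u j' hfull hfaith) ▷ D.map (aF u j')).toNatTrans
  rw [h2]
  exact ((IsETH.eqToHom' _).comp (h1.comp (IsETH.eqToHom' _))).toNatTrans

/-- The natural transformation `Comma.natTrans` as a 2-morphism in `Cat`. -/
abbrev alN : (pFn u j' ≫ ptFun (u.toFunctor.obj j') : Cat.of (StructuredArrow (u.toFunctor.obj j') u.toFunctor) ⟶ K) ⟶ vFn u j' ≫ u :=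
  ⟨Comma.natTrans (Functor.fromPUnit (u.toFunctor.obj j')) u.toFunctor⟩

lemma eth_wr_a_alpha :
    IsETH (Functor.whiskerRight (D.map₂ (alN u j')).toNatTrans
      (D.map (aF u j')).toFunctor) := by
  open Bicategory in
  have hcat : IsETH ((aF u j') ◁ (alN u j')) := by
    refine ⟨?_, ?_⟩
    · apply Cat.Hom.ext
      refine CategoryTheory.Functor.ext (fun x => rfl) ?_
      intro X Y f
      obtain rfl : X = Y := Subsingleton.elim _ _
      obtain rfl : f = 𝟙 X := Subsingleton.elim _ _
      rw [CategoryTheory.Functor.map_id, CategoryTheory.Functor.map_id, Category.id_comp]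
      refine Eq.trans ?_ (eqToHom_trans _ _).symm
      rfl
    · apply Cat.Hom₂.ext
      apply NatTrans.ext
      funext x
      refine Eq.trans ?_ (Cat.eqToHom_app _ _ _ x).symm
      rfl
  open Bicategory in
  have h1 : IsETH (D.map₂ ((aF u j') ◁ (alN u j'))) := by
    obtain ⟨h, e⟩ := hcat
    rw [e, map₂_eqToHom]
    exact IsETH.eqToHom' _
  open Bicategory in
  have h2 : (D.map₂ (alN u j') ▷ D.map (aF u j')) =
      eqToHom (D.map_comp (aF u j') _).symm ≫
        D.map₂ ((aF u j') ◁ (alN u j')) ≫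
        eqToHom (D.map_comp (aF u j') _) := by
    rw [D.map₂_whiskerLeft (aF u j') (alN u j')]
    simp
  show IsETH (D.map₂ (alN u j') ▷ D.map (aF u j')).toNatTrans
  rw [h2]
  exact ((IsETH.eqToHom' _).comp (h1.comp (IsETH.eqToHom' _))).toNatTrans

lemma unit2_eq :
    (𝟙 (D.obj ecat) : D.obj ecat ⟶ D.obj ecat) =
      D.map (pFn u j') ≫ D.map (aF u j') := by
  rw [← D.map_comp, aF_pF, D.map_id]

/-- The transported adjunction `p^* ⊣ (a_0)^*` in the derivator. -/
noncomputable def adj2 (hfull : u.toFunctor.Full) (hfaith : u.toFunctor.Faithful) :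
    (D.map (pFn u j')).toFunctor ⊣ (D.map (aF u j')).toFunctor :=
  Adjunction.mkOfUnitCounit
    { unit := eqToHom (congrArg Cat.Hom.toFunctor (unit2_eq u j' D))
      counit := (eqToHom (D.map_comp (pFn u j') (aF u j')).symm ≫
        D.map₂ (epsNat u j' hfull hfaith) ≫ eqToHom (D.map_id _)).toNatTrans
      left_triangle := by
        obtain ⟨h, e⟩ := eth_wl_p u j' D hfull hfaith
        apply NatTrans.ext
        funext Z
        have e3 : (D.map₂ (epsNat u j' hfull hfaith)).toNatTrans.app
            ((D.map (pFn u j')).toFunctor.obj Z) = (eqToHom h).app Z := by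
          rw [← e]; rfl
        simp [e3, eqToHom_app, eqToHom_map]
      right_triangle := by
        obtain ⟨h, e⟩ := eth_wr_a_eps u j' D hfull hfaith
        apply NatTrans.ext
        funext W
        have e3 : (D.map (aF u j')).toFunctor.map
            ((D.map₂ (epsNat u j' hfull hfaith)).toNatTrans.app W) = (eqToHom h).app W := by
          rw [← e]; rfl
        simp [e3, eqToHom_app, eqToHom_map] }

lemma isIso_toNatTrans' {C D : Cat.{v, w}} {F G : C ⟶ D} (η : F ⟶ G) [IsIso η] :
    IsIso η.toNatTrans :=
  (inferInstance : IsIso (asIso η).hom.toNatTrans)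

lemma counit_pt_isIso (hu : IsSieve u) (X : ↥(D.obj J)) :
    IsIso ((D.map (ptFun j')).toFunctor.map ((D.adjR u).counit.app X)) := by
  obtain ⟨hfull, hfaith, hinj, hsieve⟩ := hu
  set Y := (D.kanR u).toFunctor.obj X with hY
  set εX := (D.adjR u).counit.app X with hεX
  set β := D.bcR (pFn u j') u (vFn u j') (ptFun (u.toFunctor.obj j'))
    (alN u j') with hβdef
  haveI : IsIso β := D.der4R u (u.toFunctor.obj j')
  haveI := isIso_toNatTrans' β
  haveI hβX : IsIso (β.toNatTrans.app X) := inferInstance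
  set adj := adj2 u j' D hfull hfaith with hadj
  have h9 : ∀ Z, IsIso ((D.map (aF u j')).toFunctor.map ((D.adjR (pFn u j')).counit.app Z)) := by
    intro Z
    rw [← Adjunction.rightAdjointUniq_hom_app_counit (D.adjR (pFn u j')) adj Z,
      Functor.map_comp]
    have h9b : IsETH ((D.map (aF u j')).toFunctor.map (adj.counit.app Z)) := by
      have hc : adj.counit = (eqToHom (D.map_comp (pFn u j') (aF u j')).symm ≫
          D.map₂ (epsNat u j' hfull hfaith) ≫ eqToHom (D.map_id _)).toNatTrans := rfl
      rw [hc, Cat.Hom.toNatTrans_comp, Cat.Hom.toNatTrans_comp, NatTrans.comp_app, NatTrans.comp_app]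
      exact IsETH.map_comp3 _ (IsETH.app (IsETH.eqToHom' _).toNatTrans _)
        ((eth_wr_a_eps u j' D hfull hfaith).app Z) (IsETH.app (IsETH.eqToHom' _).toNatTrans _)
    haveI := h9b.isIso
    infer_instance
  have hb : β.toNatTrans.app X = ((D.adjR (pFn u j')).homEquiv
      ((D.map (ptFun (u.toFunctor.obj j'))).toFunctor.obj Y) ((D.map (vFn u j')).toFunctor.obj X))
      ((eqToHom (D.map_comp (pFn u j') (ptFun (u.toFunctor.obj j'))).symm ≫
        D.map₂ (alN u j') ≫
        eqToHom (D.map_comp (vFn u j') u)).toNatTrans.app Y ≫ (D.map (vFn u j')).toFunctor.map εX) := by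
    rw [Adjunction.homEquiv_unit]
    simp [hβdef, DerivatorData.bcR, Functor.map_comp]
    rfl
  have C1 : (D.map (pFn u j')).toFunctor.map (β.toNatTrans.app X) ≫
      (D.adjR (pFn u j')).counit.app ((D.map (vFn u j')).toFunctor.obj X) =
      (eqToHom (D.map_comp (pFn u j') (ptFun (u.toFunctor.obj j'))).symm ≫
        D.map₂ (alN u j') ≫
        eqToHom (D.map_comp (vFn u j') u)).toNatTrans.app Y ≫ (D.map (vFn u j')).toFunctor.map εX := by
    have h0 := congrArg ((D.adjR (pFn u j')).homEquiv
      ((D.map (ptFun (u.toFunctor.obj j'))).toFunctor.obj Y) ((D.map (vFn u j')).toFunctor.obj X)).symm hb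
    rw [Equiv.symm_apply_apply, Adjunction.homEquiv_counit] at h0
    exact h0
  have h5 : IsIso ((D.map (aF u j')).toFunctor.map ((D.map (pFn u j')).toFunctor.map (β.toNatTrans.app X) ≫
      (D.adjR (pFn u j')).counit.app ((D.map (vFn u j')).toFunctor.obj X))) := by
    rw [Functor.map_comp]
    haveI := h9 ((D.map (vFn u j')).toFunctor.obj X)
    infer_instance
  rw [C1, Functor.map_comp] at h5
  haveI := h5
  have hθa : IsETH ((D.map (aF u j')).toFunctor.map
      ((eqToHom (D.map_comp (pFn u j') (ptFun (u.toFunctor.obj j'))).symm ≫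
        D.map₂ (alN u j') ≫
        eqToHom (D.map_comp (vFn u j') u)).toNatTrans.app Y)) := by
    rw [Cat.Hom.toNatTrans_comp, Cat.Hom.toNatTrans_comp, NatTrans.comp_app, NatTrans.comp_app]
    exact IsETH.map_comp3 _ (IsETH.app (IsETH.eqToHom' _).toNatTrans _)
      ((eth_wr_a_alpha u j' D).app Y) (IsETH.app (IsETH.eqToHom' _).toNatTrans _)
  haveI := hθa.isIso
  have h6 : IsIso ((D.map (aF u j')).toFunctor.map ((D.map (vFn u j')).toFunctor.map εX)) :=
    IsIso.of_isIso_comp_left ((D.map (aF u j')).toFunctor.map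
      ((eqToHom (D.map_comp (pFn u j') (ptFun (u.toFunctor.obj j'))).symm ≫
        D.map₂ (alN u j') ≫
        eqToHom (D.map_comp (vFn u j') u)).toNatTrans.app Y)) _
  have hE : (D.map (ptFun j')).toFunctor =
      (D.map (vFn u j') ≫ D.map (aF u j') : D.obj J ⟶ D.obj ecat).toFunctor := by
    rw [← aF_vF u j']
    exact congrArg Cat.Hom.toFunctor (D.map_comp _ _)
  have hcong := Functor.congr_hom hE εX
  rw [hcong]
  haveI h6' : IsIso ((D.map (vFn u j') ≫ D.map (aF u j') :
      D.obj J ⟶ D.obj ecat).toFunctor.map εX) := h6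
  infer_instance

end SievePoint

/-- **Extension by zero along a sieve.**  Let `D` be a pointed derivator and `u : J ⟶ K` a
sieve.  Then the right Kan extension `u_* : D(J) ⥤ D(K)` is fully faithful; for every
`X ∈ D(J)` and every `k ∈ K` not in the image of `u`, the evaluation `k*(u_* X)` is a zero
object of `D(e)`; and for `k = u(j')` in the image, the canonical map gives
`k*(u_* X) ≅ j'* X`. -/
theorem extension_by_zero (D : Derivator) (hpt : Limits.HasZeroObject ↥(D.obj ecat))
    {J K : Cat.{0, 0}} (u : J ⟶ K) (hu : IsSieve u) :
    (D.kanR u).toFunctor.Full ∧ (D.kanR u).toFunctor.Faithful ∧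
      (∀ k : ↥K, (∀ j : ↥J, u.toFunctor.obj j ≠ k) → ∀ X : ↥(D.obj J),
        Limits.IsZero ((D.map (ptFun k)).toFunctor.obj ((D.kanR u).toFunctor.obj X))) ∧
      (∀ j' : ↥J, IsIso (evalKanR D u j')) := by
  obtain ⟨hfull, hfaith, hinj, hsv⟩ := hu
  have key : ∀ (j' : ↥J) (X : ↥(D.obj J)),
      IsIso ((D.map (ptFun j')).toFunctor.map ((D.adjR u).counit.app X)) :=
    fun j' X => counit_pt_isIso u j' D ⟨hfull, hfaith, hinj, hsv⟩ X
  haveI : ∀ X, IsIso ((D.adjR u).counit.app X) := fun X => D.der2 _ (fun j' => key j' X)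
  haveI hcε : IsIso (D.adjR u).counit := NatIso.isIso_of_isIso_app _
  have FF := (D.adjR u).fullyFaithfulROfIsIsoCounit
  refine ⟨FF.full, FF.faithful, ?_, ?_⟩
  · intro k hk X
    have hA : IsEmpty (StructuredArrow k u.toFunctor) := ⟨fun m => by
      obtain ⟨j'', hj''⟩ := hsv m.hom
      exact hk j'' hj''⟩
    set p : Cat.of (StructuredArrow k u.toFunctor) ⟶ ecat := (Comma.fst (Functor.fromPUnit k) u.toFunctor).toCatHom with hp
    set v : Cat.of (StructuredArrow k u.toFunctor) ⟶ J := (Comma.snd (Functor.fromPUnit k) u.toFunctor).toCatHom with hv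
    set β := D.bcR p u v (ptFun k) ⟨Comma.natTrans (Functor.fromPUnit k) u.toFunctor⟩ with hβdef
    haveI : IsIso β := D.der4R u k
    haveI := isIso_toNatTrans' β
    haveI hβX : IsIso (β.toNatTrans.app X) := inferInstance
    set Q := (D.map (ptFun k)).toFunctor.obj ((D.kanR u).toFunctor.obj X) with hQ
    have hterm : ∀ (Y₀ : ↥(D.obj ecat)) (s t : Y₀ ⟶ Q), s = t := by
      intro Y₀ s t
      have h2 : s ≫ β.toNatTrans.app X = t ≫ β.toNatTrans.app X := by
        apply ((D.adjR p).homEquiv _ _).symm.injective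
        exact (hom_unique_of_isEmpty D hA _ _).2 _ _
      exact (cancel_mono (β.toNatTrans.app X)).1 h2
    have hex : ∀ Y₀ : ↥(D.obj ecat), Nonempty (Y₀ ⟶ Q) := by
      intro Y₀
      obtain ⟨q⟩ := (hom_unique_of_isEmpty D hA ((D.map p).toFunctor.obj Y₀)
        ((D.map v).toFunctor.obj X)).1
      exact ⟨((D.adjR p).homEquiv _ _) q ≫ inv (β.toNatTrans.app X)⟩
    obtain ⟨z, hz⟩ := hpt.zero
    obtain ⟨gz⟩ := hex z
    have e : Q ≅ z :=
      { hom := hz.from_ Q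
        inv := gz
        hom_inv_id := hterm Q _ _
        inv_hom_id := hz.eq_of_src _ _ }
    exact hz.of_iso e
  · intro j'
    have happ : ∀ X, IsIso ((evalKanR D u j').toNatTrans.app X) := by
      intro X
      have : (evalKanR D u j').toNatTrans.app X =
          (eqToHom ((congrArg D.map (ptFun_comp u j').symm).trans (D.map_comp _ _))).toNatTrans.app
            ((D.kanR u).toFunctor.obj X) ≫
          (D.map (ptFun j')).toFunctor.map ((D.adjR u).counit.app X) := rfl
      rw [this]
      have h1 : IsETH ((eqToHom ((congrArg D.map (ptFun_comp u j').symm).trans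
          (D.map_comp _ _))).toNatTrans.app ((D.kanR u).toFunctor.obj X)) :=
        IsETH.app (IsETH.eqToHom' _).toNatTrans _
      haveI := h1.isIso
      haveI := key j' X
      infer_instance
    haveI : IsIso (evalKanR D u j').toNatTrans := NatIso.isIso_of_isIso_app _
    exact ⟨⟨⟨inv (evalKanR D u j').toNatTrans⟩,
      Cat.Hom₂.ext (IsIso.hom_inv_id (evalKanR D u j').toNatTrans),
      Cat.Hom₂.ext (IsIso.inv_hom_id (evalKanR D u j').toNatTrans)⟩⟩

end DerTheory
end
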